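/- Let P: ℤ → [0,1] with Σ_n P(n) = 1, P even (P(-n) = P(n)), P(n) nonincreasing for n ≥ 0. If Q satisfies the same hypotheses, then the convolution P*Q(n) = Σ_m P(m)Q(n-m) also satisfies them: it is even, attains its maximum at 0, and is nonincreasing for n ≥ 0. -/

import Mathlib

/-- Convolution of distributions on `ℤ`. -/
noncomputable def conv (P Q : ℤ → ℝ) : ℤ → ℝ := fun n => ∑' m : ℤ, P m * Q (n - m)

section aux

variable (P Q : ℤ → ℝ)

/-- The shear `(m, k) ↦ (m, k + m)` as an equiv of `ℤ × ℤ`. -/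
def shearEquiv : ℤ × ℤ ≃ ℤ × ℤ where
  toFun p := (p.1, p.2 + p.1)
  invFun p := (p.1, p.2 - p.1)
  left_inv p := by simp
  right_inv p := by simp

/-- The reflection `k ↦ c - k` as an equiv of `ℤ`. -/
def reflEquiv (c : ℤ) : ℤ ≃ ℤ where
  toFun k := c - k
  invFun k := c - k
  left_inv k := by show c - (c - k) = k; omega
  right_inv k := by show c - (c - k) = k; omega

theorem conv_summand_summable
    (hP01 : ∀ n, 0 ≤ P n ∧ P n ≤ 1) (hPsum : Summable P)
    (hQ01 : ∀ n, 0 ≤ Q n ∧ Q n ≤ 1) (n : ℤ) :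
    Summable (fun m => P m * Q (n - m)) := by
  apply Summable.of_nonneg_of_le (fun m => mul_nonneg (hP01 m).1 (hQ01 _).1)
    (fun m => ?_) hPsum
  calc P m * Q (n - m) ≤ P m * 1 :=
        mul_le_mul_of_nonneg_left (hQ01 _).2 (hP01 m).1
    _ = P m := mul_one _

set_option maxHeartbeats 1000000 in
theorem conv_step (hP01 : ∀ n, 0 ≤ P n ∧ P n ≤ 1) (hPsum : Summable P)
    (hPeven : ∀ n, P (-n) = P n)
    (hPmono : ∀ m n : ℤ, 0 ≤ m → m ≤ n → P n ≤ P m)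
    (hQ01 : ∀ n, 0 ≤ Q n ∧ Q n ≤ 1)
    (hQmono : ∀ m n : ℤ, 0 ≤ m → m ≤ n → Q n ≤ Q m)
    (hQeven : ∀ n, Q (-n) = Q n)
    (n : ℤ) (hn : 0 ≤ n) : conv P Q (n + 1) ≤ conv P Q n := by
  have hs1 := conv_summand_summable P Q hP01 hPsum hQ01 n
  have hs2 := conv_summand_summable P Q hP01 hPsum hQ01 (n + 1)
  -- f k = P k * (Q (n - k) - Q (n + 1 - k))
  set f : ℤ → ℝ := fun k => P k * Q (n - k) - P k * Q (n + 1 - k) with hf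
  have hfs : Summable f := hs1.sub hs2
  have htf : ∑' k, f k = conv P Q n - conv P Q (n + 1) := Summable.tsum_sub hs1 hs2
  set e := reflEquiv (2 * n + 1) with he
  have hfe : Summable (fun k => f (e k)) := e.summable_iff.mpr hfs
  have htfe : ∑' k, f (e k) = ∑' k, f k := e.tsum_eq f
  -- g k = f k + f (e k) is nonneg
  have hgkey : ∀ k : ℤ, k ≤ n → 0 ≤ f k + f (e k) := by
    intro k hk
    have hQ1 : Q (n - (2 * n + 1 - k)) = Q (n + 1 - k) := by
      have := hQeven (n + 1 - k); rw [show -(n + 1 - k) = n - (2 * n + 1 - k) by ring] at this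
      exact this
    have hQ2 : Q (n + 1 - (2 * n + 1 - k)) = Q (n - k) := by
      have := hQeven (n - k); rw [show -(n - k) = n + 1 - (2 * n + 1 - k) by ring] at this
      exact this
    have hek : e k = 2 * n + 1 - k := rfl
    rw [hf]
    simp only [hek, hQ1, hQ2]
    have hsum : P k * Q (n - k) - P k * Q (n + 1 - k) +
        (P (2 * n + 1 - k) * Q (n + 1 - k) - P (2 * n + 1 - k) * Q (n - k)) =
        (P k - P (2 * n + 1 - k)) * (Q (n - k) - Q (n + 1 - k)) := by ring
    rw [hsum]
    have hD : 0 ≤ Q (n - k) - Q (n + 1 - k) :=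
      sub_nonneg.mpr (hQmono (n - k) (n + 1 - k) (by omega) (by omega))
    have hPle : P (2 * n + 1 - k) ≤ P k := by
      rcases le_or_gt 0 k with h0 | h0
      · exact hPmono k (2 * n + 1 - k) h0 (by omega)
      · rw [← hPeven k]
        exact hPmono (-k) (2 * n + 1 - k) (by omega) (by omega)
    exact mul_nonneg (sub_nonneg.mpr hPle) hD
  have hg : ∀ k : ℤ, 0 ≤ f k + f (e k) := by
    intro k
    rcases le_or_gt k n with hk | hk
    · exact hgkey k hk
    · have h2 : e k ≤ n := by simp only [he, reflEquiv, Equiv.coe_fn_mk]; omega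
      have := hgkey (e k) h2
      have hee : e (e k) = k := by simp only [he, reflEquiv, Equiv.coe_fn_mk]; omega
      rw [hee] at this; linarith
  have h2f : 0 ≤ ∑' k, (f k + f (e k)) := tsum_nonneg hg
  rw [Summable.tsum_add hfs hfe, htfe] at h2f
  linarith
end aux

/-- If `P` and `Q` are symmetric unimodal probability distributions on `ℤ`
(values in `[0,1]`, sum `1`, even, nonincreasing for `n ≥ 0`), then so is
their convolution `P*Q`. -/
theorem stmt17 (P Q : ℤ → ℝ)
    (hP01 : ∀ n, 0 ≤ P n ∧ P n ≤ 1) (hPsum : Summable P) (hPtot : ∑' n : ℤ, P n = 1)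
    (hPeven : ∀ n, P (-n) = P n)
    (hPmono : ∀ m n : ℤ, 0 ≤ m → m ≤ n → P n ≤ P m)
    (hQ01 : ∀ n, 0 ≤ Q n ∧ Q n ≤ 1) (hQsum : Summable Q) (hQtot : ∑' n : ℤ, Q n = 1)
    (hQeven : ∀ n, Q (-n) = Q n)
    (hQmono : ∀ m n : ℤ, 0 ≤ m → m ≤ n → Q n ≤ Q m) :
    (∀ n, 0 ≤ conv P Q n ∧ conv P Q n ≤ 1) ∧
    Summable (conv P Q) ∧ (∑' n : ℤ, conv P Q n = 1) ∧
    (∀ n, conv P Q (-n) = conv P Q n) ∧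
    (∀ n, conv P Q n ≤ conv P Q 0) ∧
    (∀ m n : ℤ, 0 ≤ m → m ≤ n → conv P Q n ≤ conv P Q m) := by
  have hss := conv_summand_summable P Q hP01 hPsum hQ01
  -- bounds
  have hbound : ∀ n, 0 ≤ conv P Q n ∧ conv P Q n ≤ 1 := by
    intro n
    constructor
    · exact tsum_nonneg fun m => mul_nonneg (hP01 m).1 (hQ01 _).1
    · calc conv P Q n ≤ ∑' m, P m := by
            apply Summable.tsum_le_tsum _ (hss n) hPsum
            intro m
            calc P m * Q (n - m) ≤ P m * 1 :=
                  mul_le_mul_of_nonneg_left (hQ01 _).2 (hP01 m).1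
              _ = P m := mul_one _
        _ = 1 := hPtot
  -- summability on ℤ × ℤ
  have hprod : Summable (fun p : ℤ × ℤ => P p.2 * Q (p.1 - p.2)) := by
    have hbase : Summable (fun p : ℤ × ℤ => P p.1 * Q p.2) :=
      hPsum.mul_of_nonneg hQsum (fun m => (hP01 m).1) (fun m => (hQ01 m).1)
    exact ((Equiv.prodComm ℤ ℤ).trans shearEquiv.symm).summable_iff.mpr hbase
  have hsummable : Summable (conv P Q) := by
    have := (summable_prod_of_nonneg
      (f := fun p : ℤ × ℤ => P p.2 * Q (p.1 - p.2))
      (fun p => mul_nonneg (hP01 _).1 (hQ01 _).1)).mp hprod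
    exact this.2
  -- total sum
  have htot : ∑' n : ℤ, conv P Q n = 1 := by
    have h1 : ∑' n : ℤ, conv P Q n = ∑' p : ℤ × ℤ, P p.2 * Q (p.1 - p.2) :=
      (Summable.tsum_prod' hprod (fun n => hss n)).symm
    have h2 : ∑' p : ℤ × ℤ, P p.2 * Q (p.1 - p.2)
        = ∑' (m : ℤ) (n : ℤ), P m * Q (n - m) := by
      rw [← (Equiv.prodComm ℤ ℤ).tsum_eq (fun p : ℤ × ℤ => P p.2 * Q (p.1 - p.2))]
      exact Summable.tsum_prod' hprod.prod_symm
        (fun m => ((Equiv.subRight m).summable_iff.mpr hQsum).mul_left (P m))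
    have h3 : ∀ m : ℤ, ∑' n : ℤ, P m * Q (n - m) = P m := by
      intro m
      have he : ∑' x : ℤ, Q (x - m) = ∑' x : ℤ, Q x := by
        simpa using (Equiv.subRight m).tsum_eq Q
      rw [tsum_mul_left, he, hQtot, mul_one]
    rw [h1, h2]
    simp_rw [h3]
    exact hPtot
  -- evenness
  have heven : ∀ n, conv P Q (-n) = conv P Q n := by
    intro n
    unfold conv
    rw [← (Equiv.neg ℤ).tsum_eq (fun m => P m * Q (n - m))]
    apply tsum_congr
    intro m
    simp only [Equiv.neg_apply]
    rw [hPeven m, ← hQeven (n - -m)]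
    ring_nf
  -- monotonicity on n ≥ 0
  have hmono : ∀ m n : ℤ, 0 ≤ m → m ≤ n → conv P Q n ≤ conv P Q m := by
    intro m n hm hmn
    exact Int.le_induction (motive := fun k _ => conv P Q k ≤ conv P Q m) (le_refl _)
      (fun n hn ih => le_trans
        (conv_step P Q hP01 hPsum hPeven hPmono hQ01 hQmono hQeven n (le_trans hm hn)) ih)
      n hmn
  refine ⟨hbound, hsummable, htot, heven, ?_, hmono⟩
  intro n
  rcases le_or_gt 0 n with h | h
  · exact hmono 0 n le_rfl h
  · rw [← heven n]; exact hmono 0 (-n) le_rfl (by omega)
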